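/- Let S̄_v ⊆ ℝ^o be compact, X ⊆ ℝⁿ, and O ⊆ X × S̄_v; write O_x(v) := {x : (x,v) ∈ O} and O_v(x) := {v ∈ S̄_v : (x,v) ∈ O}. Let h : ℝ^o → ℝⁿ be l_h-Lipschitz on S̄_v (l_h > 0), and let δ > 0 be such that for every v ∈ S̄_v, every x ∈ X with ‖x − h(v)‖ ≤ δ satisfies (x,v) ∈ O. Let ρ : [0,∞) → [0,1] be continuous, strictly increasing, with ρ(0) = 0. Let V be a real-valued function of (x,v) and constants 0 < λ₁ ≤ λ₂, λ₃ ∈ (0, λ₂], l_V > 0, V̄ > 0. Let (x_t) ⊆ X, (v_t), (r_t) ⊆ S̄_v be sequences such that for all t: (x_t, v_t) ∈ O; λ₁‖x_t − h(v)‖ ≤ V(x_t, v) ≤ λ₂‖x_t − h(v)‖ for all v ∈ S̄_v; V(x_t, v_t) ≤ V̄; and for all t ≥ 1: V(x_t, v_{t−1}) ≤ V(x_{t−1}, v_{t−1}) − λ₃‖x_{t−1} − h(v_{t−1})‖; |V(x_t, u) − V(x_t, w)| ≤ l_V‖u − w‖ for all u, w ∈ S̄_v; and either r_t ∈ O_v(x_t)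 and v_t = r_t, or r_t ∉ O_v(x_t) and ‖v_t − v_{t−1}‖ ≥ ν̄_t, where ν̄_t := sup{ν ≥ 0 : every v ∈ S̄_v with ‖v − v_{t−1}‖ ≤ ν satisfies (x_t, v) ∈ O}. Then there exist M ∈ ℕ and ε ∈ (0,1] lying in the range of ρ, such that for all t ≥ 1: Π_{i=t}^{t+M} (1 − ρ(α_i)) ≤ 1 − ε, where α_i := ρ⁻¹(ε) if r_i = v_i, and α_i := ‖v_i − v_{i−1}‖ otherwise. -/

import Mathlib

open scoped Classical

open Finset

/-- Lemma 3 of the paper: an average contraction property for any reference governor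
satisfying Assumptions 4 and 5, along the closed-loop trajectory. Here `α_i = ρ⁻¹(ε)` if
`r_i = v_i` (the witness `a ≥ 0` with `ρ a = ε`) and `α_i = ‖v_i − v_{i−1}‖` otherwise. -/
theorem stmt10 {n o : ℕ} (Sv : Set (EuclideanSpace ℝ (Fin o))) (hSv : IsCompact Sv)
    (X : Set (EuclideanSpace ℝ (Fin n)))
    (O : Set (EuclideanSpace ℝ (Fin n) × EuclideanSpace ℝ (Fin o)))
    (h : EuclideanSpace ℝ (Fin o) → EuclideanSpace ℝ (Fin n)) (lh : ℝ) (hlh : 0 < lh)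
    (hhLip : ∀ u ∈ Sv, ∀ w ∈ Sv, ‖h u - h w‖ ≤ lh * ‖u - w‖)
    (δ : ℝ) (hδ : 0 < δ)
    (hball : ∀ v ∈ Sv, ∀ x ∈ X, ‖x - h v‖ ≤ δ → (x, v) ∈ O)
    (ρ : ℝ → ℝ) (hρcont : ContinuousOn ρ (Set.Ici 0)) (hρmono : StrictMonoOn ρ (Set.Ici 0))
    (hρ0 : ρ 0 = 0) (hρrange : ∀ s, 0 ≤ s → 0 ≤ ρ s ∧ ρ s ≤ 1)
    (V : EuclideanSpace ℝ (Fin n) → EuclideanSpace ℝ (Fin o) → ℝ)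
    (lam₁ lam₂ lam₃ lV Vbar : ℝ) (hlam₁ : 0 < lam₁) (hlam₁₂ : lam₁ ≤ lam₂)
    (hlam₃0 : 0 < lam₃) (hlam₃ : lam₃ ≤ lam₂) (hlV : 0 < lV) (hVbar : 0 < Vbar)
    (x : ℕ → EuclideanSpace ℝ (Fin n)) (v r : ℕ → EuclideanSpace ℝ (Fin o))
    (hxX : ∀ t, x t ∈ X) (hvSv : ∀ t, v t ∈ Sv) (hrSv : ∀ t, r t ∈ Sv)
    (hO : ∀ t, (x t, v t) ∈ O)
    (hVbnd : ∀ t, ∀ w ∈ Sv, lam₁ * ‖x t - h w‖ ≤ V (x t) w ∧ V (x t) w ≤ lam₂ * ‖x t - h w‖)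
    (hVub : ∀ t, V (x t) (v t) ≤ Vbar)
    (hdec : ∀ t, 1 ≤ t →
      V (x t) (v (t - 1)) ≤ V (x (t - 1)) (v (t - 1)) - lam₃ * ‖x (t - 1) - h (v (t - 1))‖)
    (hVLip : ∀ t, 1 ≤ t → ∀ u ∈ Sv, ∀ w ∈ Sv, |V (x t) u - V (x t) w| ≤ lV * ‖u - w‖)
    (hRG : ∀ t, 1 ≤ t →
      ((x t, r t) ∈ O ∧ v t = r t) ∨
      ((x t, r t) ∉ O ∧
        sSup {ν : ℝ | 0 ≤ ν ∧ ∀ w ∈ Sv, ‖w - v (t - 1)‖ ≤ ν → (x t, w) ∈ O} ≤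
          ‖v t - v (t - 1)‖)) :
    ∃ (M : ℕ) (ε a : ℝ), 0 < ε ∧ ε ≤ 1 ∧ 0 ≤ a ∧ ρ a = ε ∧
      ∀ t, 1 ≤ t →
        ∏ i ∈ Finset.Icc t (t + M),
          (1 - ρ (if r i = v i then a else ‖v i - v (i - 1)‖)) ≤ 1 - ε := by
  have hlam₂ : 0 < lam₂ := lt_of_lt_of_le hlam₁ hlam₁₂
  set q : ℝ := 1 - lam₃ / lam₂ with hq_def
  clear_value q
  have hq0 : 0 ≤ q := by
    have : lam₃ / lam₂ ≤ 1 := (div_le_one hlam₂).mpr hlam₃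
    rw [hq_def]; linarith
  have hq1 : q < 1 := by
    have : 0 < lam₃ / lam₂ := div_pos hlam₃0 hlam₂
    rw [hq_def]; linarith
  -- contraction step
  have hcontr : ∀ i, 1 ≤ i → V (x i) (v (i - 1)) ≤ q * V (x (i - 1)) (v (i - 1)) := by
    intro i hi
    have h1 := hdec i hi
    have h2 := (hVbnd (i - 1) (v (i - 1)) (hvSv (i - 1))).2
    have hnorm : V (x (i - 1)) (v (i - 1)) / lam₂ ≤ ‖x (i - 1) - h (v (i - 1))‖ :=
      (div_le_iff₀ hlam₂).mpr (by linarith)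
    have h3 : lam₃ * (V (x (i - 1)) (v (i - 1)) / lam₂) ≤ lam₃ * ‖x (i - 1) - h (v (i - 1))‖ :=
      mul_le_mul_of_nonneg_left hnorm (le_of_lt hlam₃0)
    have h4 : q * V (x (i - 1)) (v (i - 1)) =
        V (x (i - 1)) (v (i - 1)) - lam₃ * (V (x (i - 1)) (v (i - 1)) / lam₂) := by
      rw [hq_def]; ring
    nlinarith [h1, h3, h4]
  -- choice of β
  set β : ℝ := min (lam₃ / lam₂ * lam₁ * δ / (4 * lV)) (δ / (4 * lh)) with hβ_def
  have hβ0 : 0 < β := by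
    apply lt_min
    · positivity
    · positivity
  set c : ℝ := lV * β with hc_def
  have hc0 : 0 ≤ c := by positivity
  set D : ℝ := lam₂ * c / lam₃ with hD_def
  have hD0 : 0 ≤ D := by positivity
  have hDc : q * D + c = D := by
    rw [hq_def, hD_def]
    field_simp
    ring
  have hβ1 : D ≤ lam₁ * δ / 4 := by
    have h1 : β ≤ lam₃ / lam₂ * lam₁ * δ / (4 * lV) := min_le_left _ _
    have e : lam₂ * (lV * (lam₃ / lam₂ * lam₁ * δ / (4 * lV))) / lam₃ = lam₁ * δ / 4 := by
      field_simp
    calc D = lam₂ * (lV * β) / lam₃ := by rw [hD_def, hc_def]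
      _ ≤ lam₂ * (lV * (lam₃ / lam₂ * lam₁ * δ / (4 * lV))) / lam₃ := by gcongr
      _ = lam₁ * δ / 4 := e
  have hβ2 : β ≤ δ / (4 * lh) := min_le_right _ _
  -- choice of M
  obtain ⟨M, hM⟩ : ∃ M : ℕ, q ^ M < lam₁ * δ / 4 / Vbar :=
    exists_pow_lt_of_lt_one (by positivity) hq1
  have hqM : q ^ (M + 1) * Vbar ≤ lam₁ * δ / 4 := by
    have h1 : q ^ (M + 1) ≤ q ^ M := pow_le_pow_of_le_one hq0 hq1.le (by omega)
    have h2 : q ^ M * Vbar < lam₁ * δ / 4 := (lt_div_iff₀ hVbar).mp hM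
    nlinarith [pow_nonneg hq0 (M + 1)]
  refine ⟨M, ρ β, β, ?_, (hρrange β hβ0.le).2, hβ0.le, rfl, ?_⟩
  · have := hρmono (Set.self_mem_Ici) (Set.mem_Ici.mpr hβ0.le) hβ0
    rwa [hρ0] at this
  intro t ht
  by_cases hex : ∃ i ∈ Finset.Icc t (t + M), r i = v i ∨ β ≤ ‖v i - v (i - 1)‖
  · -- positive case: one factor is at most 1 - ρ β
    obtain ⟨i₀, hi₀, hc₀⟩ := hex
    have hfnonneg : ∀ i ∈ Finset.Icc t (t + M),
        0 ≤ 1 - ρ (if r i = v i then β else ‖v i - v (i - 1)‖) := by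
      intro i _
      have harg : 0 ≤ (if r i = v i then β else ‖v i - v (i - 1)‖) := by
        split
        · exact hβ0.le
        · exact norm_nonneg _
      linarith [(hρrange _ harg).2]
    have hfle1 : ∀ i ∈ Finset.Icc t (t + M),
        1 - ρ (if r i = v i then β else ‖v i - v (i - 1)‖) ≤ 1 := by
      intro i _
      have harg : 0 ≤ (if r i = v i then β else ‖v i - v (i - 1)‖) := by
        split
        · exact hβ0.le
        · exact norm_nonneg _
      linarith [(hρrange _ harg).1]
    have hf₀ : 1 - ρ (if r i₀ = v i₀ then β else ‖v i₀ - v (i₀ - 1)‖) ≤ 1 - ρ β := by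
      by_cases hrv : r i₀ = v i₀
      · simp [hrv]
      · rw [if_neg hrv]
        have hnb : β ≤ ‖v i₀ - v (i₀ - 1)‖ := by
          rcases hc₀ with hc₀ | hc₀
          · exact absurd hc₀ hrv
          · exact hc₀
        have := hρmono.monotoneOn (Set.mem_Ici.mpr hβ0.le)
          (Set.mem_Ici.mpr (norm_nonneg _)) hnb
        linarith
    rw [← Finset.mul_prod_erase _ _ hi₀]
    have hP1 : ∏ i ∈ (Finset.Icc t (t + M)).erase i₀,
        (1 - ρ (if r i = v i then β else ‖v i - v (i - 1)‖)) ≤ 1 :=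
      Finset.prod_le_one (fun i hi => hfnonneg i (Finset.mem_of_mem_erase hi))
        (fun i hi => hfle1 i (Finset.mem_of_mem_erase hi))
    calc (1 - ρ (if r i₀ = v i₀ then β else ‖v i₀ - v (i₀ - 1)‖)) *
          ∏ i ∈ (Finset.Icc t (t + M)).erase i₀,
            (1 - ρ (if r i = v i then β else ‖v i - v (i - 1)‖))
        ≤ (1 - ρ (if r i₀ = v i₀ then β else ‖v i₀ - v (i₀ - 1)‖)) * 1 :=
          mul_le_mul_of_nonneg_left hP1 (hfnonneg i₀ hi₀)
      _ = 1 - ρ (if r i₀ = v i₀ then β else ‖v i₀ - v (i₀ - 1)‖) := mul_one _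
      _ ≤ 1 - ρ β := hf₀
  · -- negative case: derive a contradiction
    exfalso
    push_neg at hex
    have hwin : ∀ i ∈ Finset.Icc t (t + M), (x i, r i) ∉ O ∧
        sSup {ν : ℝ | 0 ≤ ν ∧ ∀ w ∈ Sv, ‖w - v (i - 1)‖ ≤ ν → (x i, w) ∈ O} ≤
          ‖v i - v (i - 1)‖ ∧ ‖v i - v (i - 1)‖ < β := by
      intro i hi
      have hi1 : 1 ≤ i := le_trans ht (Finset.mem_Icc.mp hi).1
      rcases hRG i hi1 with ⟨_, hv⟩ | ⟨h1, h2⟩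
      · exact absurd hv.symm (hex i hi).1
      · exact ⟨h1, h2, (hex i hi).2⟩
    -- the Lyapunov iteration
    have hind : ∀ k, k ≤ M → V (x (t - 1 + k)) (v (t - 1 + k)) ≤ q ^ k * Vbar + D := by
      intro k
      induction k with
      | zero =>
        intro _
        simp only [Nat.add_zero, pow_zero, one_mul]
        linarith [hVub (t - 1)]
      | succ k ih =>
        intro hk
        have hW := ih (by omega)
        have hieq : t - 1 + (k + 1) = t + k := by omega
        have hieq2 : t + k - 1 = t - 1 + k := by omega
        have himem : t + k ∈ Finset.Icc t (t + M) := Finset.mem_Icc.mpr ⟨by omega, by omega⟩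
        have hi1 : 1 ≤ t + k := by omega
        have hstep := hcontr (t + k) hi1
        rw [hieq2] at hstep
        have hLip := hVLip (t + k) hi1 (v (t + k)) (hvSv _) (v (t + k - 1)) (hvSv _)
        have hβi := (hwin (t + k) himem).2.2
        rw [hieq2] at hLip hβi
        rw [hieq]
        have hA : V (x (t + k)) (v (t + k)) ≤
            V (x (t + k)) (v (t - 1 + k)) + lV * ‖v (t + k) - v (t - 1 + k)‖ := by
          have := le_abs_self (V (x (t + k)) (v (t + k)) - V (x (t + k)) (v (t - 1 + k)))
          linarith
        have h5 : lV * ‖v (t + k) - v (t - 1 + k)‖ ≤ c := by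
          rw [hc_def]
          exact mul_le_mul_of_nonneg_left hβi.le hlV.le
        have h6 : q * V (x (t - 1 + k)) (v (t - 1 + k)) ≤ q * (q ^ k * Vbar + D) :=
          mul_le_mul_of_nonneg_left hW hq0
        have key : q * (q ^ k * Vbar + D) + c = q ^ (k + 1) * Vbar + D := by
          have e : q * (q ^ k * Vbar + D) + c = q ^ (k + 1) * Vbar + (q * D + c) := by ring
          rw [e, hDc]
        linarith
    -- final estimate
    have hWM := hind M le_rfl
    have heq : t + M - 1 = t - 1 + M := by omega
    have hfin := hcontr (t + M) (by omega)
    rw [heq] at hfin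
    have h7 : V (x (t + M)) (v (t - 1 + M)) ≤ q ^ (M + 1) * Vbar + D := by
      have h6 := mul_le_mul_of_nonneg_left hWM hq0
      have e : q * (q ^ M * Vbar + D) = q ^ (M + 1) * Vbar + q * D := by ring
      have : q * D ≤ D := by linarith
      linarith [e ▸ h6]
    have h8 := (hVbnd (t + M) (v (t - 1 + M)) (hvSv _)).1
    have h9 : ‖x (t + M) - h (v (t - 1 + M))‖ ≤ δ / 2 := by
      have h10 : lam₁ * ‖x (t + M) - h (v (t - 1 + M))‖ ≤ lam₁ * (δ / 2) := by
        have : lam₁ * (δ / 2) = lam₁ * δ / 4 + lam₁ * δ / 4 := by ring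
        linarith
      exact le_of_mul_le_mul_left h10 hlam₁
    -- the sup is at least δ / (2 lh)
    have hMmem : t + M ∈ Finset.Icc t (t + M) := Finset.mem_Icc.mpr ⟨by omega, le_rfl⟩
    obtain ⟨hnO, hsup, hβM⟩ := hwin (t + M) hMmem
    rw [heq] at hsup hβM
    set S : Set ℝ := {ν : ℝ | 0 ≤ ν ∧ ∀ w ∈ Sv, ‖w - v (t - 1 + M)‖ ≤ ν → (x (t + M), w) ∈ O}
      with hS_def
    have hbdd : BddAbove S := by
      refine ⟨‖r (t + M) - v (t - 1 + M)‖, fun ν hν => ?_⟩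
      by_contra hlt
      push_neg at hlt
      exact hnO (hν.2 (r (t + M)) (hrSv _) hlt.le)
    have hmem : δ / (2 * lh) ∈ S := by
      refine ⟨by positivity, fun w hw hdist => ?_⟩
      apply hball w hw (x (t + M)) (hxX _)
      have htri : ‖x (t + M) - h w‖ ≤
          ‖x (t + M) - h (v (t - 1 + M))‖ + ‖h (v (t - 1 + M)) - h w‖ :=
        norm_sub_le_norm_sub_add_norm_sub _ _ _
      have hl : ‖h (v (t - 1 + M)) - h w‖ ≤ lh * ‖v (t - 1 + M) - w‖ :=
        hhLip _ (hvSv _) w hw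
      rw [norm_sub_rev] at hdist
      have : lh * ‖v (t - 1 + M) - w‖ ≤ lh * (δ / (2 * lh)) :=
        mul_le_mul_of_nonneg_left hdist hlh.le
      have e : lh * (δ / (2 * lh)) = δ / 2 := by field_simp
      linarith
    have hge : δ / (2 * lh) ≤ sSup S := le_csSup hbdd hmem
    have e2 : δ / (2 * lh) = δ / (4 * lh) + δ / (4 * lh) := by field_simp; ring
    have hpos : 0 < δ / (4 * lh) := by positivity
    linarith
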